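/- In the setting of the previous statement, define ξ : Hom(M(X), M(Y)) → (free reduced R-module on pointed functions X → Y) as follows. Fix a linear order on X∖{*}. For nonempty subsets F ⊆ E ⊆ X∖{*} with E = {x₁ < ⋯ < x_s}, let κ_E = [x₁∧⋯∧x_s] ∈ M(X)(⟨s⟩), and let Φ_E^F send [y₁∧⋯∧y_s] to the class of the function mapping x_t ↦ y_t for x_t ∈ F and all other points of X to the basepoint. Set ξ(T) = Σ_{∅ ≠ F ⊆ E ⊆ X∖{*}} (−1)^{|E|−|F|} Φ_E^F(T_{⟨|E|⟩}(κ_E)). Then ξ ∘ ε = id, where ε([v])_s([x₁∧⋯∧x_s]) = [v(x₁)∧⋯∧v(x_s)]. -/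

import Mathlib

/-!  Ω is the category of nonempty finite sets ⟨s⟩ = {1,…,s} (encoded here as
`Fin (s+1)`, s : ℕ, so that every object is nonempty) with surjections as
morphisms.  An `OmegaFunctor R` is a functor Ωᵒᵖ → Mod R. -/

structure OmegaFunctor (R : Type) [CommRing R] where
  obj : ℕ → Type
  [acg : ∀ s, AddCommGroup (obj s)]
  [mod : ∀ s, Module R (obj s)]
  map : ∀ {s t : ℕ} (h : Fin (t + 1) → Fin (s + 1)),
    Function.Surjective h → (obj s →ₗ[R] obj t)
  map_id : ∀ s : ℕ, map (s := s) id Function.surjective_id = LinearMap.id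
  map_comp : ∀ {s t u : ℕ} (h : Fin (t + 1) → Fin (s + 1)) (hh : Function.Surjective h)
    (k : Fin (u + 1) → Fin (t + 1)) (hk : Function.Surjective k),
    map (h ∘ k) (hh.comp hk) = (map k hk).comp (map h hh)

attribute [instance] OmegaFunctor.acg OmegaFunctor.mod

/-- Natural transformations F → G, as a submodule of the product of the Hom modules. -/
def OmegaFunctor.Nat {R : Type} [CommRing R] (F G : OmegaFunctor R) :
    Submodule R (∀ s : ℕ, F.obj s →ₗ[R] G.obj s) where
  carrier := {T | ∀ {s t : ℕ} (h : Fin (t + 1) → Fin (s + 1)) (hs : Function.Surjective h),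
    (G.map h hs).comp (T s) = (T t).comp (F.map h hs)}
  add_mem' := by
    intro a b ha hb s t h hs
    simp only [Pi.add_apply, LinearMap.comp_add, LinearMap.add_comp, ha h hs, hb h hs]
  zero_mem' := by
    intro s t h hs
    simp
  smul_mem' := by
    intro c a ha s t h hs
    simp only [Pi.smul_apply, LinearMap.comp_smul, LinearMap.smul_comp, ha h hs]

/-- The smash-power functor `M(S)` of a pointed set `(S, pt)`:
`M(S)(⟨s⟩)` is the free reduced `R`-module on the smash power `S^∧s`, whose basis is
the set of `s`-tuples of non-basepoint elements of `S`; a surjection `h : ⟨t⟩ → ⟨s⟩`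
acts by precomposition on coordinates. -/
noncomputable def Mfun (R : Type) [CommRing R] (S : Type) (pt : S) : OmegaFunctor R where
  obj s := (Fin (s + 1) → {x : S // x ≠ pt}) →₀ R
  map h _ := Finsupp.lmapDomain R R (fun x => x ∘ h)
  map_id s := by
    exact Finsupp.lmapDomain_id R R
  map_comp h hh k hk := by
    exact Finsupp.lmapDomain_comp R R (fun x => x ∘ h) (fun x => x ∘ k)

open scoped Classical
set_option linter.unusedSectionVars false

/-- Non-basepoint basepoint-preserving functions `(X,px) → (Y,py)`: the basis of
the free reduced `R`-module on the pointed set of pointed functions `X → Y`. -/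
def PFunB (X Y : Type) (px : X) (py : Y) : Type :=
  {v : X → Y // v px = py ∧ ∃ x, v x ≠ py}

section Xi

variable (R : Type) [CommRing R] (X Y : Type) [Fintype X] [DecidableEq X]
  (px : X) (py : Y) [LinearOrder {x : X // x ≠ px}]

/-- For a nonempty `E ⊆ X ∖ {*}`, `|E| = |E| - 1 + 1`. -/
theorem card_eq (E : Finset {x : X // x ≠ px}) (hE : E.Nonempty) :
    E.card = E.card - 1 + 1 :=
  (Nat.succ_pred_eq_of_pos (Finset.card_pos.mpr hE)).symm

/-- `κ_E = [x₁ ∧ ⋯ ∧ x_s] ∈ M(X)(⟨s⟩)` for `E = {x₁ < ⋯ < x_s} ⊆ X ∖ {*}`. -/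
noncomputable def kappa (E : Finset {x : X // x ≠ px}) (hE : E.Nonempty) :
    (Mfun R X px).obj (E.card - 1) :=
  Finsupp.single (fun t => (E.orderIsoOfFin (card_eq X px E hE) t).1) 1

/-- The underlying function of `Φ_E^F [y₁ ∧ ⋯ ∧ y_s]`: it sends the `t`-th element
of `E` to `y_t` when that element lies in `F`, and everything else to the
basepoint. -/
noncomputable def phiFun (E F : Finset {x : X // x ≠ px}) (hF : F.Nonempty)
    (hFE : F ⊆ E) (y : Fin (E.card - 1 + 1) → {y : Y // y ≠ py}) : X → Y :=
  fun x =>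
    if h : ∃ hx : x ≠ px, (⟨x, hx⟩ : {x : X // x ≠ px}) ∈ F then
      (y ((E.orderIsoOfFin (card_eq X px E (hF.mono hFE))).symm
        ⟨⟨x, h.choose⟩, hFE h.choose_spec⟩)).1
    else py

theorem phiFun_pointed (E F : Finset {x : X // x ≠ px}) (hF : F.Nonempty)
    (hFE : F ⊆ E) (y : Fin (E.card - 1 + 1) → {y : Y // y ≠ py}) :
    phiFun X Y px py E F hF hFE y px = py ∧
      ∃ x, phiFun X Y px py E F hF hFE y x ≠ py := by
  constructor
  · rw [phiFun, dif_neg]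
    rintro ⟨hx, -⟩
    exact hx rfl
  · refine ⟨hF.choose.1, ?_⟩
    rw [phiFun, dif_pos ⟨hF.choose.2, by simpa using hF.choose_spec⟩]
    exact (y _).2

/-- `Φ_E^F`, extended linearly from the basis of `M(Y)(⟨|E|⟩)`. -/
noncomputable def Phi (E F : Finset {x : X // x ≠ px}) (hF : F.Nonempty)
    (hFE : F ⊆ E) :
    (Mfun R Y py).obj (E.card - 1) →ₗ[R] (PFunB X Y px py →₀ R) :=
  Finsupp.lift _ R _
    (fun y => Finsupp.single
      (⟨phiFun X Y px py E F hF hFE y, phiFun_pointed X Y px py E F hF hFE y⟩ :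
        PFunB X Y px py) 1)

/-- The Bendersky–Gitler-style map
`ξ(T) = Σ_{∅ ≠ F ⊆ E ⊆ X∖{*}} (−1)^{|E|−|F|} Φ_E^F(T_{⟨|E|⟩}(κ_E))`. -/
noncomputable def xi (T : ((Mfun R X px).Nat (Mfun R Y py))) :
    PFunB X Y px py →₀ R :=
  ∑ E : Finset {x : X // x ≠ px}, ∑ F : Finset {x : X // x ≠ px},
    if h : F.Nonempty ∧ F ⊆ E then
      ((-1 : ℤ) ^ (E.card - F.card)) •
        (Phi R X Y px py E F h.1 h.2)
          (T.1 (E.card - 1) (kappa R X px E (h.1.mono h.2)))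
    else 0

end Xi

section Aux

variable (R : Type) [CommRing R] (X Y : Type) [Fintype X] [DecidableEq X]
  (px : X) (py : Y) [LinearOrder {x : X // x ≠ px}]

lemma xi_zero : xi R X Y px py 0 = 0 := by
  unfold xi
  refine Finset.sum_eq_zero fun E _ => Finset.sum_eq_zero fun F _ => ?_
  split_ifs with h
  · have h0 : (↑(0 : ((Mfun R X px).Nat (Mfun R Y py))) :
        ∀ s : ℕ, (Mfun R X px).obj s →ₗ[R] (Mfun R Y py).obj s) = 0 := rfl
    rw [h0, Pi.zero_apply, LinearMap.zero_apply, map_zero, smul_zero]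
  · rfl

lemma xi_add (a b : ((Mfun R X px).Nat (Mfun R Y py))) :
    xi R X Y px py (a + b) = xi R X Y px py a + xi R X Y px py b := by
  unfold xi
  rw [← Finset.sum_add_distrib]
  refine Finset.sum_congr rfl fun E _ => ?_
  rw [← Finset.sum_add_distrib]
  refine Finset.sum_congr rfl fun F _ => ?_
  split_ifs with h
  · have hab : (↑(a + b) : ∀ s : ℕ, (Mfun R X px).obj s →ₗ[R] (Mfun R Y py).obj s)
      = ↑a + ↑b := rfl
    rw [hab, Pi.add_apply, LinearMap.add_apply, map_add, smul_add]
  · simp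

lemma xi_smul (r : R) (a : ((Mfun R X px).Nat (Mfun R Y py))) :
    xi R X Y px py (r • a) = r • xi R X Y px py a := by
  unfold xi
  rw [Finset.smul_sum]
  refine Finset.sum_congr rfl fun E _ => ?_
  rw [Finset.smul_sum]
  refine Finset.sum_congr rfl fun F _ => ?_
  split_ifs with h
  · have hra : (↑(r • a) : ∀ s : ℕ, (Mfun R X px).obj s →ₗ[R] (Mfun R Y py).obj s)
      = r • ↑a := rfl
    rw [hra, Pi.smul_apply, LinearMap.smul_apply, map_smul, smul_comm]
  · simp

/-- The support of `v` inside `X ∖ {*}`. -/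
noncomputable def Sset (v : PFunB X Y px py) : Finset {x : X // x ≠ px} :=
  Finset.univ.filter fun a => v.1 a.1 ≠ py

lemma mem_Sset (v : PFunB X Y px py) (a : {x : X // x ≠ px}) :
    a ∈ Sset X Y px py v ↔ v.1 a.1 ≠ py := by
  simp [Sset]

lemma Sset_nonempty (v : PFunB X Y px py) : (Sset X Y px py v).Nonempty := by
  obtain ⟨x, hx⟩ := v.2.2
  have hxp : x ≠ px := fun h => hx (h ▸ v.2.1)
  exact ⟨⟨x, hxp⟩, (mem_Sset X Y px py v _).2 hx⟩

/-- Restriction of `v` to `F`, basepoint elsewhere. -/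
noncomputable def resF (v : PFunB X Y px py) (F : Finset {x : X // x ≠ px}) : X → Y :=
  fun x => if h : ∃ hx : x ≠ px, (⟨x, hx⟩ : {x : X // x ≠ px}) ∈ F then v.1 x else py

/-- `resF` as an element of `PFunB` (junk value `v` if not pointed). -/
noncomputable def wF (v : PFunB X Y px py) (F : Finset {x : X // x ≠ px}) :
    PFunB X Y px py :=
  if h : resF X Y px py v F px = py ∧ ∃ x, resF X Y px py v F x ≠ py then ⟨_, h⟩ else v

lemma resF_S (v : PFunB X Y px py) : resF X Y px py v (Sset X Y px py v) = v.1 := by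
  funext x
  rw [resF]
  split_ifs with h
  · rfl
  · push_neg at h
    by_cases hx : x = px
    · rw [hx, v.2.1]
    · have := h hx
      rw [mem_Sset] at this
      push_neg at this
      exact this.symm

lemma wF_S (v : PFunB X Y px py) : wF X Y px py v (Sset X Y px py v) = v := by
  rw [wF]
  split_ifs with h
  · exact (dif_pos h).trans (Subtype.ext (resF_S X Y px py v))
  · exact dif_neg h

lemma wF_eq (v : PFunB X Y px py) (F : Finset {x : X // x ≠ px}) (hF : F.Nonempty)
    (hFS : F ⊆ Sset X Y px py v) :
    (wF X Y px py v F : PFunB X Y px py).1 = resF X Y px py v F := by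
  rw [wF]
  have hcond : resF X Y px py v F px = py ∧ ∃ x, resF X Y px py v F x ≠ py := by
    constructor
    · rw [resF]
      exact dif_neg (by rintro ⟨hx, -⟩; exact hx rfl)
    · obtain ⟨a, ha⟩ := hF
      refine ⟨a.1, ?_⟩
      rw [resF, dif_pos ⟨a.2, by simpa using ha⟩]
      exact (mem_Sset X Y px py v a).1 (hFS ha)
  exact congrArg Subtype.val (dif_pos hcond)

/-- Inclusion–exclusion sign sum. -/
lemma sum_sign {α : Type} [Fintype α] [DecidableEq α] (F S : Finset α) (hFS : F ⊆ S) :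
    (∑ E : Finset α, if F ⊆ E ∧ E ⊆ S then ((-1 : ℤ) ^ (E.card - F.card)) else 0)
      = if F = S then 1 else 0 := by
  rw [← Finset.sum_filter]
  have := Finset.sum_nbij' (s := Finset.univ.filter fun E : Finset α => F ⊆ E ∧ E ⊆ S)
    (t := (S \ F).powerset)
    (f := fun E => ((-1 : ℤ) ^ (E.card - F.card)))
    (g := fun D => ((-1 : ℤ) ^ D.card))
    (fun E => E \ F) (fun D => F ∪ D)
    (by
      intro E hE
      rw [Finset.mem_filter] at hE
      exact Finset.mem_powerset.2 (Finset.sdiff_subset_sdiff hE.2.2 le_rfl))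
    (by
      intro D hD
      rw [Finset.mem_powerset] at hD
      refine Finset.mem_filter.2 ⟨Finset.mem_univ _, Finset.subset_union_left, ?_⟩
      exact Finset.union_subset hFS (hD.trans Finset.sdiff_subset))
    (by
      intro E hE
      rw [Finset.mem_filter] at hE
      exact Finset.union_sdiff_of_subset hE.2.1)
    (by
      intro D hD
      rw [Finset.mem_powerset] at hD
      exact Finset.union_sdiff_cancel_left
        (Finset.disjoint_left.2 fun a ha ha' => (Finset.mem_sdiff.1 (hD ha')).2 ha))
    (by
      intro E hE
      rw [Finset.mem_filter] at hE
      show (-1 : ℤ) ^ (E.card - F.card) = (-1 : ℤ) ^ ((E \ F).card)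
      rw [Finset.card_sdiff_of_subset hE.2.1])
  rw [this, Finset.sum_powerset_neg_one_pow_card]
  congr 1
  rw [Finset.sdiff_eq_empty_iff_subset, eq_iff_iff]
  exact ⟨fun h => le_antisymm hFS h, fun h => h ▸ le_rfl⟩

end Aux

section Aux2

variable (R : Type) [CommRing R] (X Y : Type) [Fintype X] [DecidableEq X]
  (px : X) (py : Y) [LinearOrder {x : X // x ≠ px}]

lemma subset_Sset_iff (v : PFunB X Y px py) (E : Finset {x : X // x ≠ px})
    (hE : E.Nonempty) :
    (∀ t : Fin (E.card - 1 + 1),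
        v.1 ((E.orderIsoOfFin (card_eq X px E hE) t) : {x : X // x ≠ px}).1 ≠ py)
      ↔ E ⊆ Sset X Y px py v := by
  constructor
  · intro hd a ha
    have h1 := hd ((E.orderIsoOfFin (card_eq X px E hE)).symm ⟨a, ha⟩)
    rw [OrderIso.apply_symm_apply] at h1
    exact (mem_Sset X Y px py v a).2 h1
  · intro hES t
    exact (mem_Sset X Y px py v _).1 (hES ((E.orderIsoOfFin (card_eq X px E hE)) t).2)

lemma xi_e_single
    (e : ((PFunB X Y px py) →₀ R) →ₗ[R] ((Mfun R X px).Nat (Mfun R Y py)))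
    (he : ∀ (v : PFunB X Y px py) (s : ℕ) (x : Fin (s + 1) → {a : X // a ≠ px}),
      (e (Finsupp.single v 1)).1 s (Finsupp.single x 1) =
        if h : ∀ t, v.1 (x t).1 ≠ py then
          Finsupp.single (fun t => (⟨v.1 (x t).1, h t⟩ : {y : Y // y ≠ py})) 1
        else 0)
    (v : PFunB X Y px py) :
    xi R X Y px py (e (Finsupp.single v 1)) = Finsupp.single v 1 := by
  have step1 :
      xi R X Y px py (e (Finsupp.single v 1)) =
        ∑ E : Finset {x : X // x ≠ px}, ∑ F : Finset {x : X // x ≠ px},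
          if F.Nonempty ∧ F ⊆ E ∧ E ⊆ Sset X Y px py v then
            ((-1 : ℤ) ^ (E.card - F.card)) • Finsupp.single (wF X Y px py v F) (1 : R)
          else 0 := by
    unfold xi
    refine Finset.sum_congr rfl fun E _ => Finset.sum_congr rfl fun F _ => ?_
    by_cases h : F.Nonempty ∧ F ⊆ E
    · rw [dif_pos h]
      simp only [kappa]
      rw [he]
      split_ifs with hd hcond hcond
      · -- main case
        have hES : E ⊆ Sset X Y px py v :=
          (subset_Sset_iff X Y px py v E (h.1.mono h.2)).mp hd
        congr 1
        simp only [Phi]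
        erw [Finsupp.lift_apply, Finsupp.sum_single_index (by rw [zero_smul]), one_smul]
        congr 1
        apply Subtype.ext
        rw [wF_eq X Y px py v F h.1 (h.2.trans hES)]
        funext x
        simp only [phiFun, resF]
        by_cases hx : ∃ hx : x ≠ px, (⟨x, hx⟩ : {x : X // x ≠ px}) ∈ F
        · rw [dif_pos hx, dif_pos hx]
          simp only [OrderIso.apply_symm_apply]
        · rw [dif_neg hx, dif_neg hx]
      · exact absurd ⟨h.1, h.2,
          (subset_Sset_iff X Y px py v E (h.1.mono h.2)).mp hd⟩ hcond
      · exact absurd ((subset_Sset_iff X Y px py v E (h.1.mono h.2)).mpr hcond.2.2) hd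
      · erw [map_zero, smul_zero]
    · rw [dif_neg h, if_neg]
      rintro ⟨h1, h2, h3⟩
      exact h ⟨h1, h2⟩
  rw [step1, Finset.sum_comm]
  have step2 : ∀ F : Finset {x : X // x ≠ px},
      (∑ E : Finset {x : X // x ≠ px},
        if F.Nonempty ∧ F ⊆ E ∧ E ⊆ Sset X Y px py v then
          ((-1 : ℤ) ^ (E.card - F.card)) • Finsupp.single (wF X Y px py v F) (1 : R)
        else 0)
        = if F = Sset X Y px py v then Finsupp.single (wF X Y px py v F) (1 : R)
          else 0 := by
    intro F
    by_cases hF : F.Nonempty ∧ F ⊆ Sset X Y px py v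
    · have h1 : ∀ E : Finset {x : X // x ≠ px},
          (if F.Nonempty ∧ F ⊆ E ∧ E ⊆ Sset X Y px py v then
            ((-1 : ℤ) ^ (E.card - F.card)) •
              Finsupp.single (wF X Y px py v F) (1 : R) else 0)
          = (if F ⊆ E ∧ E ⊆ Sset X Y px py v then ((-1 : ℤ) ^ (E.card - F.card))
              else 0) • Finsupp.single (wF X Y px py v F) (1 : R) := by
        intro E
        split_ifs with h2 h3 h3
        · rfl
        · exact absurd ⟨h2.2.1, h2.2.2⟩ h3
        · exact absurd ⟨hF.1, h3.1, h3.2⟩ h2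
        · rw [zero_smul]
      simp only [h1]
      rw [← Finset.sum_smul, sum_sign F _ hF.2]
      split_ifs with h4
      · rw [one_smul]
      · rw [zero_smul]
    · rw [Finset.sum_eq_zero, if_neg]
      · rintro rfl
        exact hF ⟨Sset_nonempty X Y px py v, Finset.Subset.refl _⟩
      · intro E _
        rw [if_neg]
        rintro ⟨h1, h2, h3⟩
        exact hF ⟨h1, h2.trans h3⟩
  rw [Finset.sum_congr rfl fun F _ => step2 F,
    Finset.sum_ite_eq' Finset.univ (Sset X Y px py v)
      (fun F => Finsupp.single (wF X Y px py v F) (1 : R)),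
    if_pos (Finset.mem_univ _), wF_S]

end Aux2

/-- from the proof of Theorem 0.6: `ξ ∘ ε = id` on the free
reduced `R`-module on pointed functions `X → Y`, where
`ε([v])_s([x₁∧⋯∧x_s]) = [v(x₁)∧⋯∧v(x_s)]`. -/
theorem xi_comp_epsilon (R : Type) [CommRing R] (X Y : Type)
    [Fintype X] [DecidableEq X] (px : X) (py : Y)
    [LinearOrder {x : X // x ≠ px}]
    (e : ((PFunB X Y px py) →₀ R) →ₗ[R] ((Mfun R X px).Nat (Mfun R Y py)))
    (he : ∀ (v : PFunB X Y px py) (s : ℕ) (x : Fin (s + 1) → {a : X // a ≠ px}),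
      (e (Finsupp.single v 1)).1 s (Finsupp.single x 1) =
        if h : ∀ t, v.1 (x t).1 ≠ py then
          Finsupp.single (fun t => (⟨v.1 (x t).1, h t⟩ : {y : Y // y ≠ py})) 1
        else 0) :
    ∀ z : (PFunB X Y px py) →₀ R, xi R X Y px py (e z) = z := by
  intro z
  induction z using Finsupp.induction_linear with
  | zero => rw [map_zero, xi_zero]
  | add f g hf hg => rw [map_add, xi_add, hf, hg]
  | single v r =>
    have hv : (Finsupp.single v r : PFunB X Y px py →₀ R) = r • Finsupp.single v 1 := by
      rw [Finsupp.smul_single, smul_eq_mul, mul_one]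
    rw [hv, map_smul, xi_smul, xi_e_single R X Y px py e he v]
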